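/- Let ψ : T → ℝ/ℤ be a 2-linear function on a finite abelian group T. If ψ restricted to T^⊥ is not identically zero (ψ is not tame), then |G(ψ)| = 0; if ψ restricted to T^⊥ is identically zero (ψ is tame), then |G(ψ)| = √(|T^⊥|·|T|). -/

import Mathlib

noncomputable def e (x : AddCircle (1 : ℝ)) : ℂ := AddCircle.toCircle x

def bform {T M : Type*} [AddCommGroup T] [AddCommGroup M] (ψ : T → M) (x y : T) : M :=
  ψ (x + y) - ψ x - ψ y

def IsTwoLinear {T M : Type*} [AddCommGroup T] [AddCommGroup M] (ψ : T → M) : Prop :=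
  ∀ x y z : T, bform ψ (x + y) z = bform ψ x z + bform ψ y z

lemma e_add (x y : AddCircle (1 : ℝ)) : e (x + y) = e x * e y := by
  simp [e, AddCircle.toCircle_add]

lemma e_zero : e (0 : AddCircle (1 : ℝ)) = 1 := by simp [e]

lemma e_abs (x : AddCircle (1 : ℝ)) : ‖e x‖ = 1 := Circle.norm_coe _

lemma conj_e (x : AddCircle (1 : ℝ)) : (starRingEnd ℂ) (e x) = e (-x) := by
  have h : AddCircle.toCircle (-x) = (AddCircle.toCircle x)⁻¹ := by
    apply eq_inv_of_mul_eq_one_left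
    rw [← AddCircle.toCircle_add]
    simp
  rw [e, e, h, Circle.coe_inv_eq_conj]

lemma e_eq_one_iff {x : AddCircle (1 : ℝ)} : e x = 1 ↔ x = 0 := by
  constructor
  · intro h
    have h2 : AddCircle.toCircle x = AddCircle.toCircle (0 : AddCircle (1 : ℝ)) := by
      apply Circle.coe_injective
      simpa [e] using h
    exact AddCircle.injective_toCircle one_ne_zero h2
  · rintro rfl; exact e_zero

/-- For a 2-linear `ψ` on a finite abelian group `T`, with
`T^⊥ = {t | ∀ s, b(t,s) = 0}`: if `ψ|_{T^⊥} ≠ 0` (not tame) then `|G(ψ)| = 0`;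
if `ψ|_{T^⊥} = 0` (tame) then `|G(ψ)| = √(|T^⊥|·|T|)`. -/
theorem gauss_sum_magnitude {T : Type*} [AddCommGroup T] [Fintype T]
    (ψ : T → AddCircle (1 : ℝ)) (hψ : IsTwoLinear ψ) :
    (¬ (∀ t : T, (∀ s : T, bform ψ t s = 0) → ψ t = 0) →
      ‖∑ t : T, e (ψ t)‖ = 0) ∧
    ((∀ t : T, (∀ s : T, bform ψ t s = 0) → ψ t = 0) →
      ‖∑ t : T, e (ψ t)‖ =
        Real.sqrt ((Nat.card {t : T // ∀ s : T, bform ψ t s = 0}) *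
          (Fintype.card T))) := by
  classical
  -- basic identities
  have hsymm : ∀ x y : T, bform ψ x y = bform ψ y x := by
    intro x y
    simp only [bform]
    rw [add_comm x y, sub_sub, sub_sub, add_comm (ψ x) (ψ y)]
  have hb0 : ∀ z : T, bform ψ 0 z = 0 := by
    intro z
    have h := hψ 0 0 z
    rw [add_zero] at h
    exact (left_eq_add.mp h)
  have hψ0 : ψ 0 = 0 := by
    have h := hb0 0
    rw [bform, add_zero, sub_self, zero_sub, neg_eq_zero] at h
    exact h
  -- the character t ↦ e (b(t,s)) for fixed s
  have hχadd : ∀ s a b : T, e (bform ψ (a + b) s) = e (bform ψ a s) * e (bform ψ b s) := by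
    intro s a b; rw [hψ a b s, e_add]
  let χ : T → AddChar T ℂ := fun s =>
    { toFun := fun t => e (bform ψ t s)
      map_zero_eq_one' := by show e (bform ψ 0 s) = 1; rw [hb0 s, e_zero]
      map_add_eq_mul' := fun a b => hχadd s a b }
  set p : T → Prop := fun t => ∀ s : T, bform ψ t s = 0 with hp
  have hχ_eq : ∀ s : T, (χ s = 0 ↔ p s) := by
    intro s
    constructor
    · intro h t
      have := DFunLike.congr_fun h t
      simp only [AddChar.zero_apply] at this
      have : e (bform ψ t s) = 1 := this
      rw [hsymm s t]
      exact e_eq_one_iff.mp this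
    · intro h
      apply DFunLike.ext
      intro t
      have : bform ψ t s = 0 := by rw [hsymm t s]; exact h t
      show e (bform ψ t s) = _
      rw [this, e_zero, AddChar.zero_apply]
  have hinner : ∀ s : T, (∑ t : T, e (bform ψ t s)) =
      if p s then (Fintype.card T : ℂ) else 0 := by
    intro s
    have h := AddChar.sum_eq_ite (χ s)
    simp only [hχ_eq s] at h
    exact h
  -- the key computation
  set G : ℂ := ∑ t : T, e (ψ t) with hG
  have hsplit : ∀ t s : T, (starRingEnd ℂ) (e (ψ t)) * e (ψ (t + s)) =
      e (ψ s) * e (bform ψ t s) := by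
    intro t s
    have h1 : ψ (t + s) = bform ψ t s + ψ t + ψ s := by
      rw [bform]; abel
    rw [h1, e_add, e_add, conj_e]
    have h2 : e (-ψ t) * e (ψ t) = 1 := by
      rw [← e_add, neg_add_cancel, e_zero]
    calc e (-ψ t) * (e (bform ψ t s) * e (ψ t) * e (ψ s))
        = (e (-ψ t) * e (ψ t)) * (e (ψ s) * e (bform ψ t s)) := by ring
      _ = e (ψ s) * e (bform ψ t s) := by rw [h2, one_mul]
  have key : (starRingEnd ℂ) G * G =
      (Fintype.card T : ℂ) * ∑ s : {t : T // p t}, e (ψ (s : T)) := by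
    calc (starRingEnd ℂ) G * G
        = ∑ t : T, ∑ u : T, (starRingEnd ℂ) (e (ψ t)) * e (ψ u) := by
          rw [hG, map_sum, Finset.sum_mul_sum]
      _ = ∑ t : T, ∑ s : T, (starRingEnd ℂ) (e (ψ t)) * e (ψ (t + s)) := by
          apply Finset.sum_congr rfl
          intro t _
          exact (Fintype.sum_equiv (Equiv.addLeft t) _ _ (fun s => rfl)).symm
      _ = ∑ t : T, ∑ s : T, e (ψ s) * e (bform ψ t s) := by
          apply Finset.sum_congr rfl; intro t _
          apply Finset.sum_congr rfl; intro s _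
          exact hsplit t s
      _ = ∑ s : T, e (ψ s) * ∑ t : T, e (bform ψ t s) := by
          rw [Finset.sum_comm]
          apply Finset.sum_congr rfl; intro s _
          rw [Finset.mul_sum]
      _ = ∑ s : T, (if p s then e (ψ s) * (Fintype.card T : ℂ) else 0) := by
          apply Finset.sum_congr rfl; intro s _
          rw [hinner s]
          split_ifs with h
          · rfl
          · rw [mul_zero]
      _ = ∑ s ∈ Finset.univ.filter p, e (ψ s) * (Fintype.card T : ℂ) := by
          rw [Finset.sum_filter]
      _ = ∑ s : {t : T // p t}, e (ψ (s : T)) * (Fintype.card T : ℂ) := by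
          exact Finset.sum_subtype _ (fun x => by
            simp only [Finset.mem_filter, Finset.mem_univ, true_and]) _
      _ = (Fintype.card T : ℂ) * ∑ s : {t : T // p t}, e (ψ (s : T)) := by
          rw [Finset.mul_sum]
          apply Finset.sum_congr rfl; intro s _
          ring
  constructor
  · -- not tame
    intro hnt
    push_neg at hnt
    obtain ⟨t0, ht0p, ht0⟩ := hnt
    -- ψ restricted to the perp is additive, giving a character ρ
    have hadd : ∀ a b : T, p a → ψ (a + b) = ψ a + ψ b := by
      intro a b ha
      have h := ha b
      rw [bform, sub_sub, sub_eq_zero] at h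
      exact h
    let S : AddSubgroup T :=
      { carrier := {t | p t}
        zero_mem' := fun s => hb0 s
        add_mem' := by
          intro a b ha hb s
          rw [hψ a b s, ha s, hb s, add_zero]
        neg_mem' := by
          intro a ha s
          have h := hψ a (-a) s
          rw [add_neg_cancel, hb0, ha s, zero_add] at h
          exact h.symm }
    have hmem : ∀ t : T, t ∈ S ↔ p t := fun t => Iff.rfl
    let ρ : AddChar S ℂ :=
      { toFun := fun t => e (ψ (t : T))
        map_zero_eq_one' := by
          show e (ψ ((0 : T))) = 1
          rw [hψ0, e_zero]
        map_add_eq_mul' := by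
          intro a b
          show e (ψ ((a : T) + (b : T))) = e (ψ (a : T)) * e (ψ (b : T))
          rw [hadd (a : T) (b : T) a.2, e_add] }
    have hρ : ρ ≠ 0 := by
      intro h
      have := DFunLike.congr_fun h ⟨t0, ht0p⟩
      simp only [AddChar.zero_apply] at this
      exact ht0 (e_eq_one_iff.mp this)
    have hsum0 : (∑ s : {t : T // p t}, e (ψ (s : T))) = 0 := by
      have h0 : (∑ s : S, e (ψ (s : T))) = 0 := AddChar.sum_eq_zero_iff_ne_zero.mpr hρ
      rw [← h0]
      exact Fintype.sum_equiv (Equiv.subtypeEquivRight fun t => (hmem t).symm) _ _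
        (fun s => rfl)
    have hG0 : (starRingEnd ℂ) G * G = 0 := by rw [key, hsum0, mul_zero]
    rcases mul_eq_zero.mp hG0 with h | h
    · have : G = 0 := by
        have := congrArg (starRingEnd ℂ) h
        simpa using this
      rw [this, norm_zero]
    · rw [h, norm_zero]
  · -- tame
    intro ht
    have hsum : (∑ s : {t : T // p t}, e (ψ (s : T))) =
        (Nat.card {t : T // p t} : ℂ) := by
      calc (∑ s : {t : T // p t}, e (ψ (s : T))) = ∑ _s : {t : T // p t}, (1 : ℂ) := by
            apply Finset.sum_congr rfl
            intro s _
            rw [ht (s : T) s.2, e_zero]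
        _ = (Nat.card {t : T // p t} : ℂ) := by
            rw [Finset.sum_const, Finset.card_univ, Nat.card_eq_fintype_card,
              nsmul_eq_mul, mul_one]
    have hnormSq : (Complex.normSq G : ℂ) =
        ((Nat.card {t : T // p t} : ℝ) * (Fintype.card T : ℝ) : ℂ) := by
      rw [← Complex.mul_conj, mul_comm G, key, hsum]
      push_cast
      ring
    have hns : Complex.normSq G = (Nat.card {t : T // p t} : ℝ) * (Fintype.card T : ℝ) := by
      exact_mod_cast hnormSq
    rw [Complex.norm_def, hns]
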